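/- arXiv:1406.7655 — 3 statements merged into one kernel-verified Lean document; each statement's English description precedes it below -/
import Mathlib

section
/- Let (w₀,w) ∈ Γ with w₀(s) > 0 for a.e. s and ∫₀^∞ w₀^q(s) ds = +∞. Define t(s) = ∫₀^s w₀^q(σ) dσ and let s(·) : [0,∞) → [0,∞) be the (continuous) inverse function of t(·). Then α(t) := w(s(t)) / w₀(s(t)) belongs to 𝒜 (it is Borel-measurable with values in A and |α|^q locally integrable), and for every x ∈ ℝⁿ the trajectory satisfies y_x(t,α) = ξ_x(s(t),w₀,w) for all t ≥ 0. -/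
open MeasureTheory Filter Topology Set RealInnerProductSpace
open scoped ENNReal NNReal

noncomputable section

/-- State space `ℝⁿ` with the Euclidean norm. -/
abbrev XX (n : ℕ) := EuclideanSpace ℝ (Fin n)
/-- Control space `ℝᵐ` with the Euclidean norm. -/
abbrev UU (m : ℕ) := EuclideanSpace ℝ (Fin m)

/-- A modulus of continuity `ω(r,R)` (second argument is a radius parameter):
`ω(·,R)` is increasing near `0`, continuous at `0`, vanishes at `0`, and `ω(r,·)` is increasing. -/
structure IsModulus (om : ℝ → ℝ → ℝ) : Prop where
  zero : ∀ R > (0:ℝ), om 0 R = 0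
  cont : ∀ R > (0:ℝ), ContinuousWithinAt (fun r => om r R) (Ici 0) 0
  mono : ∀ R > (0:ℝ), ∃ ε > (0:ℝ), MonotoneOn (fun r => om r R) (Icc 0 ε)
  monoR : ∀ r : ℝ, Monotone (fun R => om r R)

/-- `expNegE v = e^{-v}` for `v ∈ [0,∞]`. -/
def expNegE (v : ℝ≥0∞) : ℝ := if v = ⊤ then 0 else Real.exp (-v.toReal)

/-- All the data of the optimal control problem: the control set `A`, dynamics `f`,
Lagrangian `l`, exponents `p,q`, recession functions `fInf = f^∞`, `lInf = l^∞`,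
the constants and moduli appearing in (H0)–(H1), and the solution maps `traj`
(of the ordinary system), `etraj` (of the extended system) and `rtraj` (of the relaxed
extended system); the defining properties of the solution maps are the specifications
`TrajSpec`, `ETrajSpec`, `RTrajSpec` below. -/
structure Sys (n m : ℕ) where
  A : Set (UU m)
  f : XX n → UU m → XX n
  l : XX n → UU m → ℝ
  p : ℕ
  q : ℕ
  fInf : XX n → UU m → XX n
  lInf : XX n → UU m → ℝ
  M : ℝ
  L : ℝ → ℝ
  MR : ℝ → ℝ
  om : ℝ → ℝ → ℝ
  C₁ : ℝ
  C₂ : ℝ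
  traj : XX n → (ℝ → UU m) → ℝ → XX n
  etraj : XX n → (ℝ → ℝ) → (ℝ → UU m) → ℝ → XX n
  rtraj : XX n → (ℝ → Measure (UU m)) → ℝ → XX n

namespace Sys

variable {n m : ℕ} (S : Sys n m)

/-- `A` is a closed convex unbounded cone containing the origin. -/
def ACone : Prop :=
  IsClosed S.A ∧ Convex ℝ S.A ∧ (∀ c : ℝ, 0 ≤ c → ∀ a ∈ S.A, c • a ∈ S.A) ∧
    (0 : UU m) ∈ S.A ∧ ¬ Bornology.IsBounded S.A

/-- Hypothesis (H0). -/
def H0 : Prop :=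
  1 ≤ S.p ∧ S.p ≤ S.q ∧
  ContinuousOn (fun z : XX n × UU m => S.f z.1 z.2) (univ ×ˢ S.A) ∧
  ContinuousOn (fun z : XX n × UU m => S.l z.1 z.2) (univ ×ˢ S.A) ∧
  0 < S.M ∧ IsModulus S.om ∧
  (∀ R > (0:ℝ), 0 < S.L R ∧ 0 < S.MR R) ∧
  (∀ R > (0:ℝ), ∀ a ∈ S.A, ∀ x x₁ x₂ : XX n, ‖x‖ ≤ R → ‖x₁‖ ≤ R → ‖x₂‖ ≤ R →
    ‖S.f x₁ a - S.f x₂ a‖ ≤ S.L R * (1 + ‖a‖ ^ S.p) * ‖x₁ - x₂‖ ∧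
    |S.l x₁ a - S.l x₂ a| ≤ (1 + ‖a‖ ^ S.q) * S.om ‖x₁ - x₂‖ R ∧
    0 ≤ S.l x a ∧ S.l x a ≤ S.MR R * (1 + ‖a‖ ^ S.q)) ∧
  (∀ (x : XX n), ∀ a ∈ S.A, ‖S.f x a‖ ≤ S.M * (1 + ‖a‖ ^ S.p) * (1 + ‖x‖))

/-- Hypothesis (H1): (weak) coercivity of `l` and existence of the (continuous) recession
functions `f^∞`, `l^∞`, with uniform convergence on compact subsets of `ℝⁿ × A`. -/
def H1 : Prop :=
  0 ≤ S.C₁ ∧ 0 < S.C₂ ∧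
  (∀ (x : XX n), ∀ a ∈ S.A, S.C₂ * ‖a‖ ^ S.q - S.C₁ ≤ S.l x a) ∧
  ContinuousOn (fun z : XX n × UU m => S.fInf z.1 z.2) (univ ×ˢ S.A) ∧
  ContinuousOn (fun z : XX n × UU m => S.lInf z.1 z.2) (univ ×ˢ S.A) ∧
  (∀ K : Set (XX n × UU m), IsCompact K → K ⊆ univ ×ˢ S.A →
    TendstoUniformlyOn (fun (ρ : ℝ) (z : XX n × UU m) => (ρ ^ S.q) • S.f z.1 (ρ⁻¹ • z.2))
      (fun z => S.fInf z.1 z.2) (𝓝[>] (0:ℝ)) K ∧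
    TendstoUniformlyOn (fun (ρ : ℝ) (z : XX n × UU m) => (ρ ^ S.q) * S.l z.1 (ρ⁻¹ • z.2))
      (fun z => S.lInf z.1 z.2) (𝓝[>] (0:ℝ)) K)

/-- The set `𝒜` of admissible (ordinary) controls: Borel measurable, `A`-valued,
with `|α|^q` locally integrable. -/
def Admissible (α : ℝ → UU m) : Prop :=
  Measurable α ∧ (∀ t, α t ∈ S.A) ∧
  ∀ T : ℝ, 0 < T → IntegrableOn (fun t => ‖α t‖ ^ S.q) (Ioc 0 T)

/-- `g` is the (locally absolutely continuous) solution on `[0,∞)` of `g' = v`, `g 0 = x`,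
expressed in integral form. -/
def SolvesODE (g : ℝ → XX n) (x : XX n) (v : ℝ → XX n) : Prop :=
  ContinuousOn g (Ici 0) ∧ g 0 = x ∧
  ∀ t ≥ (0:ℝ), g t = x + ∫ τ in (0:ℝ)..t, v τ

/-- Specification of the solution map of the ordinary control system:
`traj x α` is the unique solution of `ẏ = f(y,α)`, `y(0) = x`. -/
def TrajSpec : Prop :=
  ∀ (x : XX n) (α : ℝ → UU m), S.Admissible α →
    SolvesODE (S.traj x α) x (fun t => S.f (S.traj x α t) (α t)) ∧
    ∀ g : ℝ → XX n, SolvesODE g x (fun t => S.f (g t) (α t)) →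
      ∀ t ≥ (0:ℝ), g t = S.traj x α t

/-- The compact control set `S(A)` of the extended problem. -/
def SAset : Set (ℝ × UU m) :=
  {z | 0 ≤ z.1 ∧ z.2 ∈ S.A ∧ z.1 ^ S.q + ‖z.2‖ ^ S.q = 1}

/-- The extended dynamics `f̄`. -/
def fbar (x : XX n) (w₀ : ℝ) (w : UU m) : XX n :=
  if w₀ = 0 then S.fInf x w else (w₀ ^ S.q) • S.f x (w₀⁻¹ • w)

/-- The extended Lagrangian `l̄`. -/
def lbar (x : XX n) (w₀ : ℝ) (w : UU m) : ℝ :=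
  if w₀ = 0 then S.lInf x w else (w₀ ^ S.q) * S.l x (w₀⁻¹ • w)

/-- The set `Γ` of extended controls. -/
def EAdmissible (w₀ : ℝ → ℝ) (w : ℝ → UU m) : Prop :=
  Measurable w₀ ∧ Measurable w ∧ ∀ s, (w₀ s, w s) ∈ S.SAset

/-- Specification of the solution map of the extended control system. -/
def ETrajSpec : Prop :=
  ∀ (x : XX n) (w₀ : ℝ → ℝ) (w : ℝ → UU m), S.EAdmissible w₀ w →
    SolvesODE (S.etraj x w₀ w) x (fun s => S.fbar (S.etraj x w₀ w s) (w₀ s) (w s)) ∧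
    ∀ g : ℝ → XX n, SolvesODE g x (fun s => S.fbar (g s) (w₀ s) (w s)) →
      ∀ s ≥ (0:ℝ), g s = S.etraj x w₀ w s

/-- The compact set `K_A = {w ∈ A : |w| ≤ 1}`. -/
def KA : Set (UU m) := {w | w ∈ S.A ∧ ‖w‖ ≤ 1}

/-- `w₀(w) = (1-|w|^q)^{1/q}`. -/
def w0of (w : UU m) : ℝ := (1 - ‖w‖ ^ S.q) ^ ((S.q : ℝ)⁻¹)

/-- The relaxed extended dynamics `f̄^r(x,μ) = ∫ f̄(x,(1-|w|^q)^{1/q},w) dμ(w)`. -/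
def fbarr (x : XX n) (μ : Measure (UU m)) : XX n := ∫ w, S.fbar x (S.w0of w) w ∂μ

/-- The relaxed extended Lagrangian `l̄^r(x,μ) = ∫ l̄(x,(1-|w|^q)^{1/q},w) dμ(w)`. -/
def lbarr (x : XX n) (μ : Measure (UU m)) : ℝ := ∫ w, S.lbar x (S.w0of w) w ∂μ

/-- The set `Γ^r` of relaxed extended controls: measurable families of probability
measures supported in `K_A`. -/
def RAdmissible (μ : ℝ → Measure (UU m)) : Prop :=
  (∀ s, IsProbabilityMeasure (μ s)) ∧ (∀ s, (μ s) S.KAᶜ = 0) ∧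
  ∀ g : UU m → ℝ, Continuous g → Measurable (fun s => ∫ w, g w ∂(μ s))

/-- Specification of the solution map of the relaxed extended control system. -/
def RTrajSpec : Prop :=
  ∀ (x : XX n) (μ : ℝ → Measure (UU m)), S.RAdmissible μ →
    SolvesODE (S.rtraj x μ) x (fun s => S.fbarr (S.rtraj x μ s) (μ s)) ∧
    ∀ g : ℝ → XX n, SolvesODE g x (fun s => S.fbarr (g s) (μ s)) →
      ∀ s ≥ (0:ℝ), g s = S.rtraj x μ s

/-- The basic standing assumptions: `A` is a closed convex unbounded cone containing `0`,
(H0), (H1) hold, and the three solution maps satisfy their specifications. -/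
def Setup : Prop :=
  S.ACone ∧ S.H0 ∧ S.H1 ∧ S.TrajSpec ∧ S.ETrajSpec ∧ S.RTrajSpec

/-! ### Payoffs and value functions -/

/-- Finite-horizon payoff `𝒥(t,x,α)` (in `[0,∞]`). -/
def finCost (t : ℝ) (x : XX n) (α : ℝ → UU m) : ℝ≥0∞ :=
  ∫⁻ τ in Ioc (0:ℝ) t, ENNReal.ofReal (S.l (S.traj x α τ) (α τ))

/-- Infinite-horizon payoff `𝒥(+∞,x,α)`. -/
def infCost (x : XX n) (α : ℝ → UU m) : ℝ≥0∞ :=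
  ∫⁻ τ in Ioi (0:ℝ), ENNReal.ofReal (S.l (S.traj x α τ) (α τ))

/-- The finite-horizon value function `𝒱(t,x)`. -/
def finVal (t : ℝ) (x : XX n) : ℝ≥0∞ :=
  sInf {c | ∃ α, S.Admissible α ∧ c = S.finCost t x α}

/-- The infinite-horizon value function `𝒱(x)`. -/
def infVal (x : XX n) : ℝ≥0∞ :=
  sInf {c | ∃ α, S.Admissible α ∧ c = S.infCost x α}

/-- `Σ(x) = lim_{t→∞} 𝒱(t,x) = sup_{t>0} 𝒱(t,x)`. -/
def SigmaFn (x : XX n) : ℝ≥0∞ := ⨆ t : ℝ, ⨆ _ : 0 < t, S.finVal t x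

/-- Extended payoff `J(S,x,w₀,w)`. -/
def eCost (Sf : ℝ) (x : XX n) (w₀ : ℝ → ℝ) (w : ℝ → UU m) : ℝ≥0∞ :=
  ∫⁻ s in Ioc (0:ℝ) Sf, ENNReal.ofReal (S.lbar (S.etraj x w₀ w s) (w₀ s) (w s))

/-- Extended infinite-horizon payoff `J(+∞,x,w₀,w)`. -/
def eInfCost (x : XX n) (w₀ : ℝ → ℝ) (w : ℝ → UU m) : ℝ≥0∞ :=
  ∫⁻ s in Ioi (0:ℝ), ENNReal.ofReal (S.lbar (S.etraj x w₀ w s) (w₀ s) (w s))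

/-- The extended finite-horizon value function `V(t,x)`. -/
def eFinVal (t : ℝ) (x : XX n) : ℝ≥0∞ :=
  sInf {c | ∃ w₀ w Sf, S.EAdmissible w₀ w ∧ 0 < Sf ∧
    (∫ s in Ioc (0:ℝ) Sf, (w₀ s) ^ S.q) = t ∧ c = S.eCost Sf x w₀ w}

/-- The extended infinite-horizon value function `V(x)`. -/
def eInfVal (x : XX n) : ℝ≥0∞ :=
  sInf {c | ∃ w₀ w, S.EAdmissible w₀ w ∧ c = S.eInfCost x w₀ w}

/-- Relaxed extended payoff `J^r(S,x,μ)`. -/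
def rCost (Sf : ℝ) (x : XX n) (μ : ℝ → Measure (UU m)) : ℝ≥0∞ :=
  ∫⁻ s in Ioc (0:ℝ) Sf, ENNReal.ofReal (S.lbarr (S.rtraj x μ s) (μ s))

/-- Relaxed extended infinite-horizon payoff `J^r(+∞,x,μ)`. -/
def rInfCost (x : XX n) (μ : ℝ → Measure (UU m)) : ℝ≥0∞ :=
  ∫⁻ s in Ioi (0:ℝ), ENNReal.ofReal (S.lbarr (S.rtraj x μ s) (μ s))

/-- The relaxed finite-horizon value function `V^r(t,x)`. -/
def rFinVal (t : ℝ) (x : XX n) : ℝ≥0∞ :=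
  sInf {c | ∃ μ Sf, S.RAdmissible μ ∧ 0 < Sf ∧
    (∫ s in Ioc (0:ℝ) Sf, (1 - ∫ w, ‖w‖ ^ S.q ∂(μ s))) = t ∧ c = S.rCost Sf x μ}

/-- The relaxed infinite-horizon value function `V^r(x)`. -/
def rInfVal (x : XX n) : ℝ≥0∞ :=
  sInf {c | ∃ μ, S.RAdmissible μ ∧ c = S.rInfCost x μ}

/-- The unconstrained relaxed value `W(s,x)` over the parameter interval `[0,s]`. -/
def WVal (s : ℝ) (x : XX n) : ℝ≥0∞ :=
  sInf {c | ∃ μ, S.RAdmissible μ ∧ c = S.rCost s x μ}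

/-- Discounted payoff. -/
def discCost (δ : ℝ) (x : XX n) (α : ℝ → UU m) : ℝ≥0∞ :=
  ∫⁻ τ in Ioi (0:ℝ), ENNReal.ofReal (Real.exp (-(δ * τ)) * S.l (S.traj x α τ) (α τ))

/-- The discounted infinite-horizon value function `𝒱_δ(x)`. -/
def discVal (δ : ℝ) (x : XX n) : ℝ≥0∞ :=
  sInf {c | ∃ α, S.Admissible α ∧ c = S.discCost δ x α}

/-! ### Further hypotheses -/

/-- Hypothesis (H2). -/
def H2 (T : Set (XX n)) : Prop :=
  T.Nonempty ∧ IsClosed T ∧ IsCompact (frontier T) ∧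
  (∀ x ∈ T, S.infVal x = 0) ∧
  ∀ xb ∈ frontier T, Tendsto S.infVal (𝓝 xb) (𝓝 0)

/-- Hypothesis (H3). -/
def H3 (T : Set (XX n)) : Prop :=
  ∀ x : XX n, S.eInfVal x < ⊤ → ∃ ε : ℝ, 0 < ε ∧
    ∀ w₀ w, S.EAdmissible w₀ w →
      S.eInfCost x w₀ w ≤ S.eInfVal x + ENNReal.ofReal ε →
      Filter.liminf (fun s => Metric.infDist (S.etraj x w₀ w s) T) atTop = 0

/-- Hypothesis (CV)'. -/
def CVp : Prop :=
  ∀ x : XX n, Convex ℝ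
    {v : ℝ × XX n × ℝ | ∃ w₀ ∈ Icc (0:ℝ) 1, ∃ w ∈ S.KA,
      v.1 = w₀ ^ S.q ∧ v.2.1 = S.fbar x w₀ w ∧ S.lbar x w₀ w ≤ v.2.2}

/-- Hypothesis (H0)₁: the constants and modulus in (H0) are independent of `R`,
`|f(x,a)| ≤ M(1+|a|^p)`, and `∫₀¹ ω(s)/s ds < ∞`. -/
def H01 : Prop :=
  (∀ R R' : ℝ, 0 < R → 0 < R' →
    S.L R = S.L R' ∧ S.MR R = S.MR R' ∧ ∀ r, S.om r R = S.om r R') ∧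
  (∀ (x : XX n), ∀ a ∈ S.A, ‖S.f x a‖ ≤ S.M * (1 + ‖a‖ ^ S.p)) ∧
  IntegrableOn (fun s => S.om s 1 / s) (Ioc (0:ℝ) 1)

/-- Hypothesis (H0)₂: optimal relaxed trajectories are bounded, and a Dini-type
condition on the modulus of `l`. -/
def H02 : Prop :=
  ∀ x : XX n, S.rInfVal x < ⊤ →
    ∃ μ, S.RAdmissible μ ∧ S.rInfCost x μ = S.rInfVal x ∧
      ∃ Rb : ℝ, 0 < Rb ∧ (∀ s ≥ (0:ℝ), ‖S.rtraj x μ s‖ ≤ Rb) ∧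
        IntegrableOn (fun s => S.om s (Rb + 3) / s) (Ioc (0:ℝ) 1)

/-- The lower semicontinuous envelope `u_*(x) = (liminf_{z→x} u(z)) ∧ u(x)`. -/
def lscEnv (u : XX n → ℝ≥0∞) (x : XX n) : ℝ≥0∞ :=
  min (Filter.liminf u (𝓝[≠] x)) (u x)

/-! ### Hamiltonians and viscosity notions -/

/-- The extended Hamiltonian `H(x,p) = max_{(w₀,w)∈S(A)} {-⟨f̄(x,w₀,w),p⟩ - l̄(x,w₀,w)}`. -/
def ham (x pv : XX n) : ℝ :=
  sSup {r : ℝ | ∃ w₀ w, (w₀, w) ∈ S.SAset ∧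
    r = -(inner ℝ (S.fbar x w₀ w) pv : ℝ) - S.lbar x w₀ w}

/-- The Kruzkov-transformed Hamiltonian `K(x,r,p)`. -/
def kru (x : XX n) (u : ℝ) (pv : XX n) : ℝ :=
  sSup {r : ℝ | ∃ w₀ w, (w₀, w) ∈ S.SAset ∧
    r = -(inner ℝ (S.fbar x w₀ w) pv : ℝ) - S.lbar x w₀ w + S.lbar x w₀ w * u}

/-- The effective Hamiltonian `H̃_λ(x,p)`. -/
def hamTilde (lam : ℝ) (x pv : XX n) : ℝ :=
  sSup {r : ℝ | ∃ w₀ w, (w₀, w) ∈ S.SAset ∧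
    r = -(inner ℝ (S.fbar x w₀ w) pv : ℝ) - S.lbar x w₀ w + lam * w₀ ^ S.q}

/-- `u : ℝⁿ → [0,∞]` is a viscosity supersolution of `H(x,Du) = 0` at every point of `ℝⁿ`:
at each `x₀` either `u_*(x₀) = +∞`, or for every `C¹` test function `φ` such that `u_* - φ`
has a local minimum at `x₀` one has `H(x₀,Dφ(x₀)) ≥ 0`. -/
def IsSupersolH (u : XX n → ℝ≥0∞) : Prop :=
  ∀ x₀ : XX n, lscEnv u x₀ = ⊤ ∨
    ∀ φ : XX n → ℝ, ContDiff ℝ 1 φ →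
      (∀ᶠ x in 𝓝 x₀,
        (lscEnv u x₀ : EReal) - ((φ x₀ : ℝ) : EReal) ≤ (lscEnv u x : EReal) - ((φ x : ℝ) : EReal)) →
      0 ≤ S.ham x₀ (gradient φ x₀)

/-- Lower semicontinuous envelope of a real-valued function. -/
def lscEnvR (u : XX n → ℝ) (x : XX n) : ℝ := Filter.liminf u (𝓝 x)

/-- Upper semicontinuous envelope of a real-valued function. -/
def uscEnvR (u : XX n → ℝ) (x : XX n) : ℝ := Filter.limsup u (𝓝 x)

/-- Viscosity supersolution of `K(x,u,Du) = 0` at `x₀`. -/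
def KruSupersolAt (u : XX n → ℝ) (x₀ : XX n) : Prop :=
  ∀ φ : XX n → ℝ, ContDiff ℝ 1 φ →
    IsLocalMin (fun x => lscEnvR u x - φ x) x₀ →
    0 ≤ S.kru x₀ (lscEnvR u x₀) (gradient φ x₀)

/-- Viscosity subsolution of `K(x,u,Du) = 0` at `x₀`. -/
def KruSubsolAt (u : XX n → ℝ) (x₀ : XX n) : Prop :=
  ∀ φ : XX n → ℝ, ContDiff ℝ 1 φ →
    IsLocalMax (fun x => uscEnvR u x - φ x) x₀ →
    S.kru x₀ (uscEnvR u x₀) (gradient φ x₀) ≤ 0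

/-- Viscosity solution of `K(x,u,Du) = 0` on a set `Ω`. -/
def KruSolOn (u : XX n → ℝ) (Ω : Set (XX n)) : Prop :=
  ∀ x ∈ Ω, S.KruSupersolAt u x ∧ S.KruSubsolAt u x

/-- `u` (continuous) is a viscosity solution of `G(x,Du) = 0` in `ℝⁿ`. -/
def IsViscSol (G : XX n → XX n → ℝ) (u : XX n → ℝ) : Prop :=
  ∀ x₀ : XX n,
    (∀ φ : XX n → ℝ, ContDiff ℝ 1 φ →
      IsLocalMin (fun x => u x - φ x) x₀ → 0 ≤ G x₀ (gradient φ x₀)) ∧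
    (∀ φ : XX n → ℝ, ContDiff ℝ 1 φ →
      IsLocalMax (fun x => u x - φ x) x₀ → G x₀ (gradient φ x₀) ≤ 0)

/-! ### Periodic setting -/

/-- The distance on the torus `ℝⁿ/(∏ Tᵢ ℤ)`. -/
def torusDist (T : Fin n → ℝ) (x z : XX n) : ℝ :=
  sInf {d : ℝ | ∃ k : Fin n → ℤ,
    d = ‖x - z - ∑ i, ((k i : ℝ) • EuclideanSpace.single i (T i))‖}

/-- Hypothesis (H4): periodic data with global Lipschitz/growth constants `L`, `M`,
and complete controllability of the relaxed extended system with constants `C`, `γ`. -/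
def H4 (T : Fin n → ℝ) (L M C γ : ℝ) : Prop :=
  (∀ i, 0 < T i) ∧ 0 < L ∧ 0 < M ∧ 0 < C ∧ 0 < γ ∧
  (∀ i : Fin n, ∀ (x : XX n), ∀ a ∈ S.A,
    S.f (x + EuclideanSpace.single i (T i)) a = S.f x a ∧
    S.l (x + EuclideanSpace.single i (T i)) a = S.l x a) ∧
  (∀ a ∈ S.A, ∀ x x₁ x₂ : XX n,
    ‖S.f x₁ a - S.f x₂ a‖ ≤ L * (1 + ‖a‖ ^ S.p) * ‖x₁ - x₂‖ ∧
    |S.l x₁ a - S.l x₂ a| ≤ L * (1 + ‖a‖ ^ S.q) * ‖x₁ - x₂‖ ∧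
    0 ≤ S.l x a ∧ S.l x a ≤ M * (1 + ‖a‖ ^ S.q) ∧
    ‖S.f x a‖ ≤ M * (1 + ‖a‖ ^ S.p)) ∧
  (∀ x z : XX n, ∃ Sf : ℝ, 0 < Sf ∧ ∃ μ, S.RAdmissible μ ∧
    (∃ k : Fin n → ℤ,
      S.rtraj x μ Sf = z + ∑ i, ((k i : ℝ) • EuclideanSpace.single i (T i))) ∧
    Sf ≤ C * torusDist T x z ^ γ)

end Sys

open Sys

/-- Composition of a function continuous on a measurable set with an a.e.-measurable
function taking values in that set is a.e.-measurable. -/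
private lemma aemeas_comp_continuousOn {α γ δ : Type*} [MeasurableSpace α]
    [MeasurableSpace γ] [TopologicalSpace γ] [BorelSpace γ]
    [MeasurableSpace δ] [TopologicalSpace δ] [BorelSpace δ]
    {C : Set γ} (hC : MeasurableSet C) {F : γ → δ} (hF : ContinuousOn F C)
    {μ : Measure α} {h : α → γ} (hh : AEMeasurable h μ)
    (hmem : ∀ x, h x ∈ C) (c₀ : γ) (hc₀ : c₀ ∈ C) :
    AEMeasurable (fun x => F (h x)) μ := by
  classical
  obtain ⟨g, gm, hg⟩ := hh
  set g' : α → γ := (g ⁻¹' C).piecewise g (fun _ => c₀) with hg'def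
  have g'm : Measurable g' := Measurable.piecewise (gm hC) gm measurable_const
  have mem' : ∀ x, g' x ∈ C := by
    intro x
    by_cases hx : x ∈ g ⁻¹' C
    · rw [hg'def, Set.piecewise_eq_of_mem _ _ _ hx]; exact hx
    · rw [hg'def, Set.piecewise_eq_of_notMem _ _ _ hx]; exact hc₀
  have key : Measurable fun x => F (g' x) := by
    have hFr : Continuous (C.restrict F) := hF.restrict
    have hsub : Measurable fun x => (⟨g' x, mem' x⟩ : C) := g'm.subtype_mk
    exact hFr.measurable.comp hsub
  refine ⟨fun x => F (g' x), key, ?_⟩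
  filter_upwards [hg] with x hx
  have hxe : g' x = h x := by
    have hxC : x ∈ g ⁻¹' C := by
      rw [Set.mem_preimage, ← hx]; exact hmem x
    rw [hg'def, Set.piecewise_eq_of_mem _ _ _ hxC, ← hx]
  rw [hxe]

/-- an extended control `(w₀,w) ∈ Γ⁺` with `∫₀^∞ w₀^q = ∞` gives rise,
via the continuous inverse `s(·)` of `t(s) = ∫₀^s w₀^q dσ`, to an ordinary admissible
control `α(t) = w(s(t))/w₀(s(t))` whose trajectory is the reparametrised extended one. -/
theorem stmt_1 {n m : ℕ} (hn : 1 ≤ n) (hm : 1 ≤ m) (S : Sys n m) (hS : S.Setup)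
    (w₀ : ℝ → ℝ) (w : ℝ → UU m) (hw : S.EAdmissible w₀ w)
    (hpos : ∀ᵐ s ∂(volume.restrict (Ioi (0:ℝ))), 0 < w₀ s)
    (hdiv : ∫⁻ s in Ioi (0:ℝ), ENNReal.ofReal ((w₀ s) ^ S.q) = ⊤)
    (sf : ℝ → ℝ) (hsf0 : ∀ t ≥ (0:ℝ), 0 ≤ sf t) (hsfc : Continuous sf)
    (hsf1 : ∀ s ≥ (0:ℝ), sf (∫ σ in (0:ℝ)..s, (w₀ σ) ^ S.q) = s)
    (hsf2 : ∀ t ≥ (0:ℝ), (∫ σ in (0:ℝ)..(sf t), (w₀ σ) ^ S.q) = t) :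
    ∀ α : ℝ → UU m, (∀ t, α t = (w₀ (sf t))⁻¹ • w (sf t)) →
      S.Admissible α ∧
      ∀ x : XX n, ∀ t ≥ (0:ℝ), S.traj x α t = S.etraj x w₀ w (sf t) := by
  intro α hα
  obtain ⟨hAcone, hH0, hH1, hTraj, hETraj, hRTraj⟩ := hS
  obtain ⟨hAcl, hAcv, hAco, hA0, -⟩ := hAcone
  obtain ⟨hp1, hpq, hfc, hlc, -⟩ := hH0
  have hq1 : 1 ≤ S.q := le_trans hp1 hpq
  have hqne : S.q ≠ 0 := by omega
  have hsfm : Measurable sf := hsfc.measurable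
  -- basic facts about w₀, w
  have hw0m : Measurable w₀ := hw.1
  have hwm : Measurable w := hw.2.1
  have hw0nn : ∀ s, 0 ≤ w₀ s := fun s => (hw.2.2 s).1
  have hwA : ∀ s, w s ∈ S.A := fun s => (hw.2.2 s).2.1
  have hsum : ∀ s, w₀ s ^ S.q + ‖w s‖ ^ S.q = 1 := fun s => (hw.2.2 s).2.2
  have hw0le : ∀ s, w₀ s ≤ 1 := by
    intro s
    have h1 : w₀ s ^ S.q ≤ 1 := by
      nlinarith [pow_nonneg (norm_nonneg (w s)) S.q, hsum s]
    exact (pow_le_one_iff_of_nonneg (hw0nn s) hqne).1 h1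
  have hwle : ∀ s, ‖w s‖ ≤ 1 := by
    intro s
    have h1 : ‖w s‖ ^ S.q ≤ 1 := by nlinarith [pow_nonneg (hw0nn s) S.q, hsum s]
    exact (pow_le_one_iff_of_nonneg (norm_nonneg _) hqne).1 h1
  have hΦm : Measurable (fun σ => w₀ σ ^ S.q) := hw0m.pow_const _
  have hΦnn : ∀ σ, 0 ≤ w₀ σ ^ S.q := fun σ => pow_nonneg (hw0nn σ) _
  have hΦle : ∀ σ, w₀ σ ^ S.q ≤ 1 := fun σ => pow_le_one₀ (hw0nn σ) (hw0le σ)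
  have hΦint : ∀ u : Set ℝ, volume u ≠ ⊤ →
      IntegrableOn (fun σ => w₀ σ ^ S.q) u := by
    intro u hu
    haveI : IsFiniteMeasure (volume.restrict u) := by
      constructor
      rw [Measure.restrict_apply_univ]
      exact lt_top_iff_ne_top.2 hu
    refine Integrable.mono' (integrable_const 1) hΦm.aestronglyMeasurable ?_
    refine Filter.Eventually.of_forall fun σ => ?_
    rw [Real.norm_eq_abs, abs_of_nonneg (hΦnn σ)]; exact hΦle σ
  have hΦii : ∀ a b : ℝ, IntervalIntegrable (fun σ => w₀ σ ^ S.q) volume a b := by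
    intro a b
    rw [intervalIntegrable_iff]
    exact hΦint _ (by rw [Set.uIoc]; exact measure_Ioc_lt_top.ne)
  set tfun : ℝ → ℝ := fun s => ∫ σ in (0:ℝ)..s, w₀ σ ^ S.q with htfun
  have htfun_eq : ∀ s, tfun s = ∫ σ in (0:ℝ)..s, w₀ σ ^ S.q := fun _ => rfl
  have htnn : ∀ s, 0 ≤ s → 0 ≤ tfun s := fun s hs =>
    intervalIntegral.integral_nonneg hs (fun σ _ => hΦnn σ)
  have htmono : ∀ a b : ℝ, 0 ≤ a → a ≤ b → tfun a ≤ tfun b := by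
    intro a b _ hab
    have h1 : tfun b - tfun a = ∫ σ in a..b, w₀ σ ^ S.q :=
      intervalIntegral.integral_interval_sub_left (hΦii 0 b) (hΦii 0 a)
    have h2 : (0:ℝ) ≤ ∫ σ in a..b, w₀ σ ^ S.q :=
      intervalIntegral.integral_nonneg hab (fun σ _ => hΦnn σ)
    linarith
  have htsf : ∀ t : ℝ, 0 ≤ t → tfun (sf t) = t := fun t ht => hsf2 t ht
  have hsft : ∀ s : ℝ, 0 ≤ s → sf (tfun s) = s := fun s hs => hsf1 s hs
  have hsf00 : sf 0 = 0 := by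
    have h0 := hsf1 0 le_rfl
    rwa [intervalIntegral.integral_same] at h0
  have hsfmono : ∀ a b : ℝ, 0 ≤ a → a ≤ b → sf a ≤ sf b := by
    intro a b ha hab
    by_contra hlt
    push_neg at hlt
    have h1 : tfun (sf b) ≤ tfun (sf a) :=
      htmono _ _ (hsf0 b (le_trans ha hab)) hlt.le
    rw [htsf a ha, htsf b (le_trans ha hab)] at h1
    have hab' : a = b := le_antisymm hab h1
    rw [hab'] at hlt; exact lt_irrefl _ hlt
  -- the density measure
  set D : ℝ → ℝ≥0∞ := fun s => ENNReal.ofReal (w₀ s ^ S.q) with hD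
  have hDm : Measurable D := hΦm.ennreal_ofReal
  set ν : Measure ℝ := volume.withDensity D with hν
  have hIoc : ∀ c : ℝ, 0 ≤ c → ν (Ioc 0 c) = ENNReal.ofReal (tfun c) := by
    intro c hc
    rw [hν, withDensity_apply _ measurableSet_Ioc,
      ← ofReal_integral_eq_lintegral_ofReal (hΦint _ (by simp))
        (Filter.Eventually.of_forall fun σ => hΦnn σ),
      htfun_eq, intervalIntegral.integral_of_le hc]
  -- the key change-of-variables measure identity
  have key : ∀ t : ℝ, 0 ≤ t →
      Measure.map sf (volume.restrict (Ioc 0 t)) = ν.restrict (Ioc 0 (sf t)) := by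
    intro t ht
    haveI : IsFiniteMeasure (Measure.map sf (volume.restrict (Ioc 0 t))) := by
      constructor
      rw [Measure.map_apply hsfm MeasurableSet.univ, Set.preimage_univ,
        Measure.restrict_apply_univ]
      simp [Real.volume_Ioc]
    refine Measure.ext_of_Iic _ _ (fun s' => ?_)
    have hL : Measure.map sf (volume.restrict (Ioc 0 t)) (Iic s')
        = volume (sf ⁻¹' (Iic s') ∩ Ioc 0 t) := by
      rw [Measure.map_apply hsfm measurableSet_Iic,
        Measure.restrict_apply (hsfm measurableSet_Iic)]
    have hR : ν.restrict (Ioc 0 (sf t)) (Iic s') = ν (Iic s' ∩ Ioc 0 (sf t)) :=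
      Measure.restrict_apply measurableSet_Iic
    by_cases hs' : 0 ≤ s'
    · have hset1 : sf ⁻¹' (Iic s') ∩ Ioc 0 t = Ioc 0 (min t (tfun s')) := by
        ext τ
        simp only [Set.mem_inter_iff, Set.mem_preimage, Set.mem_Iic, Set.mem_Ioc,
          le_min_iff]
        constructor
        · rintro ⟨h1, h2, h3⟩
          refine ⟨h2, h3, ?_⟩
          have h4 : tfun (sf τ) ≤ tfun s' := htmono _ _ (hsf0 τ h2.le) h1
          rwa [htsf τ h2.le] at h4
        · rintro ⟨h1, h2, h3⟩
          refine ⟨?_, h1, h2⟩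
          have h4 : sf τ ≤ sf (tfun s') := hsfmono _ _ h1.le h3
          rwa [hsft s' hs'] at h4
      have hset2 : Iic s' ∩ Ioc 0 (sf t) = Ioc 0 (min s' (sf t)) := by
        ext σ
        simp only [Set.mem_inter_iff, Set.mem_Iic, Set.mem_Ioc, le_min_iff]
        tauto
      have hmin : tfun (min s' (sf t)) = min t (tfun s') := by
        rcases le_total s' (sf t) with hc | hc
        · rw [min_eq_left hc, min_eq_right]
          have := htmono _ _ hs' hc
          rwa [htsf t ht] at this
        · rw [min_eq_right hc, htsf t ht, min_eq_left]
          have := htmono _ _ (hsf0 t ht) hc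
          rwa [htsf t ht] at this
      rw [hL, hR, hset1, hset2, hIoc _ (le_min hs' (hsf0 t ht)), hmin,
        Real.volume_Ioc]
      norm_num
    · push_neg at hs'
      have hset1 : sf ⁻¹' (Iic s') ∩ Ioc 0 t = ∅ := by
        rw [Set.eq_empty_iff_forall_notMem]
        rintro τ ⟨h1, h2⟩
        rw [Set.mem_preimage, Set.mem_Iic] at h1
        exact absurd (le_trans (hsf0 τ h2.1.le) h1) (not_le.2 hs')
      have hset2 : Iic s' ∩ Ioc 0 (sf t) = ∅ := by
        rw [Set.eq_empty_iff_forall_notMem]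
        rintro σ ⟨h1, h2⟩
        rw [Set.mem_Iic] at h1
        exact absurd (le_trans h2.1.le h1) (not_le.2 hs')
      rw [hL, hR, hset1, hset2]; simp
  -- ν-a.e. positivity of w₀
  have measP : MeasurableSet {s : ℝ | 0 < w₀ s} := measurableSet_lt measurable_const hw0m
  have hν_ae : ∀ᵐ σ ∂ν, 0 < w₀ σ := by
    rw [ae_iff]
    have hNm : MeasurableSet {σ : ℝ | ¬ 0 < w₀ σ} := measP.compl
    rw [hν, withDensity_apply _ hNm]
    have hz : ∀ σ ∈ {σ : ℝ | ¬ 0 < w₀ σ}, D σ = 0 := by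
      intro σ hσ
      have h0 : w₀ σ = 0 := le_antisymm (not_lt.1 hσ) (hw0nn σ)
      simp [hD, h0, zero_pow hqne]
    rw [setLIntegral_congr_fun hNm hz]
    simp
  -- Admissibility of α
  have hαm : Measurable α := by
    have hα' : α = fun t => (w₀ (sf t))⁻¹ • w (sf t) := funext hα
    rw [hα']
    exact ((hw0m.comp hsfm).inv).smul (hwm.comp hsfm)
  have hposIoc : ∀ u : ℝ, ∀ᵐ σ ∂(volume.restrict (Ioc 0 u)), 0 < w₀ σ :=
    fun u => ae_restrict_of_ae_restrict_of_subset Ioc_subset_Ioi_self hpos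
  have hAdm : S.Admissible α := by
    refine ⟨hαm, ?_, ?_⟩
    · intro t
      rw [hα t]
      exact hAco _ (inv_nonneg.mpr (hw0nn _)) _ (hwA _)
    · intro T hT
      refine ⟨(hαm.norm.pow_const _).aestronglyMeasurable, ?_⟩
      rw [hasFiniteIntegral_iff_ofReal
        (Filter.Eventually.of_forall fun τ => pow_nonneg (norm_nonneg _) _)]
      set h : ℝ → ℝ≥0∞ := fun s => ENNReal.ofReal (‖(w₀ s)⁻¹ • w s‖ ^ S.q) with hh
      have hhm : Measurable h := ((hw0m.inv.smul hwm).norm.pow_const _).ennreal_ofReal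
      have e1 : ∫⁻ τ in Ioc (0:ℝ) T, ENNReal.ofReal (‖α τ‖ ^ S.q)
          = ∫⁻ τ in Ioc (0:ℝ) T, h (sf τ) := by
        apply lintegral_congr; intro τ; rw [hα τ]
      rw [e1, ← lintegral_map hhm hsfm, key T hT.le, hν,
        restrict_withDensity measurableSet_Ioc,
        lintegral_withDensity_eq_lintegral_mul _ hDm hhm]
      have bound : ∀ᵐ σ ∂(volume.restrict (Ioc 0 (sf T))), (D * h) σ ≤ 1 := by
        filter_upwards [hposIoc (sf T)] with σ hσ
        have hne : w₀ σ ≠ 0 := hσ.ne'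
        have hnorm : ‖(w₀ σ)⁻¹ • w σ‖ ^ S.q = (w₀ σ)⁻¹ ^ S.q * ‖w σ‖ ^ S.q := by
          rw [norm_smul, Real.norm_eq_abs, abs_of_nonneg (inv_nonneg.mpr (hw0nn σ)),
            mul_pow]
        have : (D * h) σ = ENNReal.ofReal (‖w σ‖ ^ S.q) := by
          simp only [hD, hh, Pi.mul_apply]
          rw [← ENNReal.ofReal_mul (hΦnn σ), hnorm, ← mul_assoc, ← mul_pow,
            mul_inv_cancel₀ hne, one_pow, one_mul]
        rw [this]
        calc ENNReal.ofReal (‖w σ‖ ^ S.q) ≤ ENNReal.ofReal 1 :=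
              ENNReal.ofReal_le_ofReal (pow_le_one₀ (norm_nonneg _) (hwle σ))
          _ = 1 := ENNReal.ofReal_one
      calc ∫⁻ σ in Ioc (0:ℝ) (sf T), (D * h) σ
          ≤ ∫⁻ _ in Ioc (0:ℝ) (sf T), 1 := lintegral_mono_ae bound
        _ < ⊤ := by
            rw [lintegral_const, Measure.restrict_apply_univ]
            simp [Real.volume_Ioc]
  refine ⟨hAdm, ?_⟩
  -- Trajectory identity
  intro x t ht
  obtain ⟨hξsol, -⟩ := hETraj x w₀ w hw
  set ξ : ℝ → XX n := S.etraj x w₀ w with hξ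
  -- change of variables for the dynamics, for every u ≥ 0
  have esub : ∀ u : ℝ, 0 ≤ u →
      ∫ τ in Ioc (0:ℝ) u, S.f (ξ (sf τ)) (α τ)
        = ∫ σ in Ioc (0:ℝ) (sf u), S.fbar (ξ σ) (w₀ σ) (w σ) := by
    intro u hu
    have hsfu : 0 ≤ sf u := hsf0 u hu
    have hξae : AEMeasurable ξ (volume.restrict (Ioc 0 (sf u))) := by
      have h1 : AEMeasurable ξ (volume.restrict (Ici 0)) :=
        hξsol.1.aemeasurable measurableSet_Ici
      exact h1.mono_measure (Measure.restrict_mono (fun σ hσ => hσ.1.le) le_rfl)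
    set G : ℝ → XX n := fun s => ((w₀ s) ^ S.q)⁻¹ • S.fbar (ξ s) (w₀ s) (w s) with hG
    have hG₂ae : AEMeasurable
        (fun s => ((w₀ s) ^ S.q)⁻¹ • ((w₀ s) ^ S.q • S.f (ξ s) ((w₀ s)⁻¹ • w s)))
        (volume.restrict (Ioc 0 (sf u))) := by
      have hpair : AEMeasurable (fun s => (ξ s, (w₀ s)⁻¹ • w s))
          (volume.restrict (Ioc 0 (sf u))) :=
        hξae.prodMk (hw0m.inv.smul hwm).aemeasurable
      have hmem : ∀ s, (ξ s, (w₀ s)⁻¹ • w s) ∈ (univ ×ˢ S.A : Set (XX n × UU m)) :=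
        fun s => ⟨trivial, hAco _ (inv_nonneg.mpr (hw0nn s)) _ (hwA s)⟩
      have hCm : MeasurableSet (univ ×ˢ S.A : Set (XX n × UU m)) :=
        MeasurableSet.univ.prod hAcl.measurableSet
      have hfae : AEMeasurable (fun s => S.f (ξ s) ((w₀ s)⁻¹ • w s))
          (volume.restrict (Ioc 0 (sf u))) :=
        aemeas_comp_continuousOn hCm hfc hpair hmem (0, 0)
          ⟨trivial, hA0⟩
      exact ((hΦm.inv).aemeasurable).smul ((hΦm.aemeasurable).smul hfae)
    have hGνae : AEStronglyMeasurable G (ν.restrict (Ioc 0 (sf u))) := by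
      have hac : ν.restrict (Ioc 0 (sf u)) ≪ volume.restrict (Ioc 0 (sf u)) := by
        rw [hν, restrict_withDensity measurableSet_Ioc]
        exact withDensity_absolutelyContinuous _ _
      have hG₂ν : AEMeasurable
          (fun s => ((w₀ s) ^ S.q)⁻¹ • ((w₀ s) ^ S.q • S.f (ξ s) ((w₀ s)⁻¹ • w s)))
          (ν.restrict (Ioc 0 (sf u))) := hG₂ae.mono_ac hac
      have hcongr : (fun s => ((w₀ s) ^ S.q)⁻¹ • ((w₀ s) ^ S.q • S.f (ξ s) ((w₀ s)⁻¹ • w s)))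
          =ᵐ[ν.restrict (Ioc 0 (sf u))] G := by
        filter_upwards [ae_restrict_of_ae hν_ae] with σ hσ
        simp only [hG, Sys.fbar, if_neg hσ.ne']
      exact (aestronglyMeasurable_iff_aemeasurable).2 (hG₂ν.congr hcongr)
    have hμt_pos : ∀ᵐ τ ∂(volume.restrict (Ioc 0 u)), 0 < w₀ (sf τ) := by
      have h1 : ∀ᵐ s ∂(Measure.map sf (volume.restrict (Ioc 0 u))), 0 < w₀ s := by
        rw [key u hu]; exact ae_restrict_of_ae hν_ae
      exact ((ae_map_iff hsfm.aemeasurable measP).1 h1)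
    have e1 : (fun τ => S.f (ξ (sf τ)) (α τ))
        =ᵐ[volume.restrict (Ioc 0 u)] fun τ => G (sf τ) := by
      filter_upwards [hμt_pos] with τ hτ
      have hne : w₀ (sf τ) ^ S.q ≠ 0 := (pow_pos hτ _).ne'
      simp only [hG, Sys.fbar, if_neg hτ.ne', hα τ]
      rw [inv_smul_smul₀ hne]
    rw [integral_congr_ae e1,
      ← integral_map hsfm.aemeasurable (by rw [key u hu]; exact hGνae),
      key u hu, hν, restrict_withDensity measurableSet_Ioc]
    have hdnn : Measurable fun σ => Real.toNNReal (w₀ σ ^ S.q) := hΦm.real_toNNReal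
    have hDD : (volume.restrict (Ioc (0:ℝ) (sf u))).withDensity D
        = (volume.restrict (Ioc (0:ℝ) (sf u))).withDensity
            (fun σ => ((Real.toNNReal (w₀ σ ^ S.q) : ℝ≥0) : ℝ≥0∞)) := rfl
    rw [hDD, integral_withDensity_eq_integral_smul hdnn G]
    apply integral_congr_ae
    filter_upwards [hposIoc (sf u)] with σ hσ
    have hne : w₀ σ ^ S.q ≠ 0 := (pow_pos hσ _).ne'
    simp only [hG]
    rw [NNReal.smul_def, Real.coe_toNNReal _ (hΦnn σ), smul_smul,
      mul_inv_cancel₀ hne, one_smul]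
  -- the reparametrised trajectory solves the ordinary ODE
  have hgsol : SolvesODE (fun τ => ξ (sf τ)) x (fun τ => S.f (ξ (sf τ)) (α τ)) := by
    refine ⟨?_, ?_, ?_⟩
    · exact hξsol.1.comp hsfc.continuousOn (fun τ hτ => hsf0 τ hτ)
    · show ξ (sf 0) = x
      rw [hsf00]; exact hξsol.2.1
    · intro τ hτ
      show ξ (sf τ) = x + ∫ τ' in (0:ℝ)..τ, S.f (ξ (sf τ')) (α τ')
      have h1 := hξsol.2.2 (sf τ) (hsf0 τ hτ)
      rw [h1]
      congr 1
      rw [intervalIntegral.integral_of_le hτ, intervalIntegral.integral_of_le (hsf0 τ hτ),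
        esub τ hτ]
  have huniq := (hTraj x α hAdm).2 _ hgsol t ht
  exact huniq.symm
end
end

section
/- For every x ∈ ℝⁿ and every extended control (w₀,w) ∈ Γ such that the extended infinite-horizon cost is finite, i.e. J(+∞,x,w₀,w) = ∫₀^∞ l̄(ξ_x(s,w₀,w),w₀(s),w(s)) ds < +∞, one necessarily has ∫₀^∞ w₀^q(s) ds = +∞. -/
open MeasureTheory Filter Topology Set RealInnerProductSpace
open scoped ENNReal NNReal

noncomputable section

open Sys

lemma lbar_coercive_aux {n m : ℕ} (S : Sys n m) (hS : S.Setup)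
    (x : XX n) (w₀ : ℝ) (w : UU m) (h : (w₀, w) ∈ S.SAset) :
    S.C₂ * ‖w‖ ^ S.q - S.C₁ * w₀ ^ S.q ≤ S.lbar x w₀ w := by
  obtain ⟨hA, h0, h1, -, -, -⟩ := hS
  obtain ⟨hw0, hwA, -⟩ := h
  obtain ⟨-, -, hcoer, -, -, hTU⟩ := h1
  obtain ⟨-, -, hcone, -, -⟩ := hA
  have key : ∀ ρ : ℝ, 0 < ρ →
      S.C₂ * ‖w‖ ^ S.q - S.C₁ * ρ ^ S.q ≤ ρ ^ S.q * S.l x (ρ⁻¹ • w) := by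
    intro ρ hρ
    have hmem : ρ⁻¹ • w ∈ S.A := hcone ρ⁻¹ (by positivity) w hwA
    have hl := hcoer x _ hmem
    have hnorm : ‖ρ⁻¹ • w‖ ^ S.q = (ρ⁻¹) ^ S.q * ‖w‖ ^ S.q := by
      rw [norm_smul, Real.norm_eq_abs, abs_of_pos (by positivity), mul_pow]
    have hinv : ρ ^ S.q * (ρ⁻¹) ^ S.q = 1 := by
      rw [← mul_pow, mul_inv_cancel₀ hρ.ne', one_pow]
    have hstep := mul_le_mul_of_nonneg_left hl
      (le_of_lt (by positivity : (0:ℝ) < ρ ^ S.q))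
    calc S.C₂ * ‖w‖ ^ S.q - S.C₁ * ρ ^ S.q
        = ρ ^ S.q * (S.C₂ * ‖ρ⁻¹ • w‖ ^ S.q - S.C₁) := by
          rw [hnorm]; linear_combination (-(S.C₂ * ‖w‖ ^ S.q)) * hinv
      _ ≤ ρ ^ S.q * S.l x (ρ⁻¹ • w) := hstep
  by_cases h0' : w₀ = 0
  · subst h0'
    rw [Sys.lbar, if_pos rfl]
    have hK : IsCompact ({(x, w)} : Set (XX n × UU m)) := isCompact_singleton
    have hsub : ({(x, w)} : Set (XX n × UU m)) ⊆ univ ×ˢ S.A := by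
      intro z hz; rw [mem_singleton_iff] at hz; subst hz
      exact ⟨mem_univ _, hwA⟩
    have htend := ((hTU _ hK hsub).2).tendsto_at (mem_singleton _)
    have htend2 : Tendsto (fun ρ : ℝ => S.C₂ * ‖w‖ ^ S.q - S.C₁ * ρ ^ S.q)
        (𝓝[>] (0:ℝ)) (𝓝 (S.C₂ * ‖w‖ ^ S.q - S.C₁ * (0:ℝ) ^ S.q)) :=
      ((continuous_const.sub (continuous_const.mul (continuous_pow S.q))).tendsto
        0).mono_left nhdsWithin_le_nhds
    refine le_of_tendsto_of_tendsto htend2 htend ?_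
    filter_upwards [self_mem_nhdsWithin] with ρ hρ
    exact key ρ hρ
  · have hpos : 0 < w₀ := lt_of_le_of_ne hw0 (Ne.symm h0')
    rw [Sys.lbar, if_neg h0']
    exact key w₀ hpos

/-- any extended control with finite extended infinite-horizon cost
necessarily satisfies `∫₀^∞ w₀^q(s) ds = +∞`. -/
theorem stmt_2 {n m : ℕ} (hn : 1 ≤ n) (hm : 1 ≤ m) (S : Sys n m) (hS : S.Setup)
    (x : XX n) (w₀ : ℝ → ℝ) (w : ℝ → UU m) (hw : S.EAdmissible w₀ w)
    (hfin : S.eInfCost x w₀ w < ⊤) :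
    ∫⁻ s in Ioi (0:ℝ), ENNReal.ofReal ((w₀ s) ^ S.q) = ⊤ := by
  by_contra hne
  have hC1 : 0 ≤ S.C₁ := hS.2.2.1.1
  have hC2 : 0 < S.C₂ := hS.2.2.1.2.1
  set ξ := S.etraj x w₀ w with hξ
  have hpt : ∀ s : ℝ, ENNReal.ofReal S.C₂ ≤
      ENNReal.ofReal (S.lbar (ξ s) (w₀ s) (w s)) +
        ENNReal.ofReal ((S.C₁ + S.C₂) * (w₀ s) ^ S.q) := by
    intro s
    have hmem := hw.2.2 s
    have hcoer := lbar_coercive_aux S hS (ξ s) (w₀ s) (w s) hmem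
    have hsum : (w₀ s) ^ S.q + ‖w s‖ ^ S.q = 1 := hmem.2.2
    have hreal : S.C₂ ≤ S.lbar (ξ s) (w₀ s) (w s) + (S.C₁ + S.C₂) * (w₀ s) ^ S.q := by
      nlinarith
    calc ENNReal.ofReal S.C₂
        ≤ ENNReal.ofReal (S.lbar (ξ s) (w₀ s) (w s) + (S.C₁ + S.C₂) * (w₀ s) ^ S.q) :=
          ENNReal.ofReal_le_ofReal hreal
      _ ≤ _ := ENNReal.ofReal_add_le
  have hmeas : Measurable (fun s => ENNReal.ofReal ((S.C₁ + S.C₂) * (w₀ s) ^ S.q)) :=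
    (measurable_const.mul (hw.1.pow_const S.q)).ennreal_ofReal
  have hint : ∫⁻ s in Ioi (0:ℝ), ENNReal.ofReal S.C₂ ≤
      S.eInfCost x w₀ w +
        ∫⁻ s in Ioi (0:ℝ), ENNReal.ofReal ((S.C₁ + S.C₂) * (w₀ s) ^ S.q) := by
    rw [Sys.eInfCost, ← lintegral_add_right _ hmeas]
    exact lintegral_mono fun s => hpt s
  have hlhs : ∫⁻ s in Ioi (0:ℝ), ENNReal.ofReal S.C₂ = ⊤ := by
    rw [setLIntegral_const, Real.volume_Ioi, ENNReal.mul_top]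
    simpa using hC2
  have hrhs : ∫⁻ s in Ioi (0:ℝ), ENNReal.ofReal ((S.C₁ + S.C₂) * (w₀ s) ^ S.q) ≠ ⊤ := by
    have heq : ∀ s, ENNReal.ofReal ((S.C₁ + S.C₂) * (w₀ s) ^ S.q) =
        ENNReal.ofReal (S.C₁ + S.C₂) * ENNReal.ofReal ((w₀ s) ^ S.q) := fun s =>
      ENNReal.ofReal_mul (by positivity)
    rw [funext heq, lintegral_const_mul' _ _ ENNReal.ofReal_ne_top]
    exact ENNReal.mul_ne_top ENNReal.ofReal_ne_top hne
  rw [hlhs] at hint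
  exact (ENNReal.add_ne_top.mpr ⟨hfin.ne, hrhs⟩) (top_le_iff.mp hint)
end
end

section
/- Assume liminf_{|x|→+∞} inf_{a∈A} l(x,a) > 0. Then for every x ∈ ℝⁿ with V^r(x) < +∞ and every optimal relaxed control μ ∈ Γ^r (i.e. such that J^r(+∞,x,μ) = V^r(x) < +∞), the corresponding relaxed trajectory is bounded: sup_{s≥0} |ξ^r_x(s,μ)| < +∞. -/
open MeasureTheory Filter Topology Set RealInnerProductSpace
open scoped ENNReal NNReal

noncomputable section

open Sys

section AuxLemmas

namespace Sys

variable {n m : ℕ} (S : Sys n m)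

lemma aux_one_sub_norm_pow_nonneg {w : UU m} (hw : ‖w‖ ≤ 1) :
    0 ≤ 1 - ‖w‖ ^ S.q := by
  have := pow_le_one₀ (norm_nonneg w) hw (n := S.q)
  linarith

lemma aux_w0of_nonneg {w : UU m} (hw : ‖w‖ ≤ 1) : 0 ≤ S.w0of w :=
  Real.rpow_nonneg (S.aux_one_sub_norm_pow_nonneg hw) _

lemma aux_w0of_le_one {w : UU m} (hw : ‖w‖ ≤ 1) : S.w0of w ≤ 1 :=
  Real.rpow_le_one (S.aux_one_sub_norm_pow_nonneg hw)
    (by nlinarith [pow_nonneg (norm_nonneg w) S.q]) (by positivity)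

lemma aux_w0of_pow (hq : S.q ≠ 0) {w : UU m} (hw : ‖w‖ ≤ 1) :
    (S.w0of w) ^ S.q = 1 - ‖w‖ ^ S.q :=
  Real.rpow_inv_natCast_pow (S.aux_one_sub_norm_pow_nonneg hw) hq

lemma aux_w0of_continuous (hq : S.q ≠ 0) : Continuous S.w0of := by
  have h1 : Continuous fun t : ℝ => t ^ ((S.q : ℝ)⁻¹) :=
    continuous_iff_continuousAt.2 fun t =>
      Real.continuousAt_rpow_const t _ (Or.inr (by positivity))
  exact h1.comp (continuous_const.sub ((continuous_norm).pow S.q))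

/-- Pointwise bound for the scaled dynamics. -/
lemma aux_scaled_f_bound (hS : S.Setup) (y : XX n) {w : UU m} (hwA : w ∈ S.A)
    (hw : ‖w‖ ≤ 1) {ρ : ℝ} (hρ0 : 0 < ρ) (hρ1 : ρ ≤ 1) :
    ‖(ρ ^ S.q) • S.f y (ρ⁻¹ • w)‖ ≤ 2 * S.M * (1 + ‖y‖) := by
  obtain ⟨hA, h0, -⟩ := hS
  have hpq : S.p ≤ S.q := h0.2.1
  have hM : 0 < S.M := h0.2.2.2.2.1
  have hgrow := h0.2.2.2.2.2.2.2.2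
  have haA : ρ⁻¹ • w ∈ S.A := hA.2.2.1 ρ⁻¹ (by positivity) w hwA
  have hfb := hgrow y _ haA
  have hna : ‖ρ⁻¹ • w‖ = ρ⁻¹ * ‖w‖ := by
    rw [norm_smul, Real.norm_eq_abs, abs_of_nonneg (by positivity)]
  have hρq : (0:ℝ) ≤ ρ ^ S.q := by positivity
  have hkey : ρ ^ S.q * (1 + ‖ρ⁻¹ • w‖ ^ S.p) ≤ 2 := by
    rw [hna, mul_pow]
    have e1 : ρ ^ S.q * ((ρ⁻¹) ^ S.p * ‖w‖ ^ S.p)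
        = ρ ^ (S.q - S.p) * ‖w‖ ^ S.p := by
      have hq' : ρ ^ S.q = ρ ^ (S.q - S.p) * ρ ^ S.p := by
        rw [← pow_add, Nat.sub_add_cancel hpq]
      have hcan : ρ ^ S.p * (ρ⁻¹) ^ S.p = 1 := by
        rw [← mul_pow, mul_inv_cancel₀ hρ0.ne', one_pow]
      calc ρ ^ S.q * ((ρ⁻¹) ^ S.p * ‖w‖ ^ S.p)
          = ρ ^ (S.q - S.p) * ((ρ ^ S.p * (ρ⁻¹) ^ S.p) * ‖w‖ ^ S.p) := by rw [hq']; ring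
        _ = ρ ^ (S.q - S.p) * ‖w‖ ^ S.p := by rw [hcan, one_mul]
    have hqle : ρ ^ S.q ≤ 1 := pow_le_one₀ hρ0.le hρ1
    have hqple : ρ ^ (S.q - S.p) ≤ 1 := pow_le_one₀ hρ0.le hρ1
    have hwp : ‖w‖ ^ S.p ≤ 1 := pow_le_one₀ (norm_nonneg w) hw
    have h2 : ρ ^ (S.q - S.p) * ‖w‖ ^ S.p ≤ 1 :=
      mul_le_one₀ hqple (by positivity) hwp
    calc ρ ^ S.q * (1 + (ρ⁻¹) ^ S.p * ‖w‖ ^ S.p)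
        = ρ ^ S.q + ρ ^ S.q * ((ρ⁻¹) ^ S.p * ‖w‖ ^ S.p) := by ring
      _ = ρ ^ S.q + ρ ^ (S.q - S.p) * ‖w‖ ^ S.p := by rw [e1]
      _ ≤ 2 := by linarith
  have hy : (0:ℝ) ≤ 1 + ‖y‖ := by positivity
  calc ‖(ρ ^ S.q) • S.f y (ρ⁻¹ • w)‖ = ρ ^ S.q * ‖S.f y (ρ⁻¹ • w)‖ := by
        rw [norm_smul, Real.norm_eq_abs, abs_of_nonneg hρq]
    _ ≤ ρ ^ S.q * (S.M * (1 + ‖ρ⁻¹ • w‖ ^ S.p) * (1 + ‖y‖)) :=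
        mul_le_mul_of_nonneg_left hfb hρq
    _ = (ρ ^ S.q * (1 + ‖ρ⁻¹ • w‖ ^ S.p)) * (S.M * (1 + ‖y‖)) := by ring
    _ ≤ 2 * (S.M * (1 + ‖y‖)) := by
        apply mul_le_mul_of_nonneg_right hkey (by positivity)
    _ = 2 * S.M * (1 + ‖y‖) := by ring

/-- Pointwise bounds for the scaled Lagrangian. -/
lemma aux_scaled_l_bounds (hS : S.Setup) (y : XX n) {w : UU m} (hwA : w ∈ S.A)
    {ρ : ℝ} (hρ0 : 0 < ρ) :
    0 ≤ ρ ^ S.q * S.l y (ρ⁻¹ • w) ∧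
    ρ ^ S.q * S.l y (ρ⁻¹ • w) ≤ S.MR (‖y‖ + 1) * (ρ ^ S.q + ‖w‖ ^ S.q) ∧
    S.C₂ * ‖w‖ ^ S.q - S.C₁ * ρ ^ S.q ≤ ρ ^ S.q * S.l y (ρ⁻¹ • w) := by
  obtain ⟨hA, h0, h1, -⟩ := hS
  have hbnds := h0.2.2.2.2.2.2.2.1
  have haA : ρ⁻¹ • w ∈ S.A := hA.2.2.1 ρ⁻¹ (by positivity) w hwA
  have hb := hbnds (‖y‖ + 1) (by positivity) _ haA y y y
    (by linarith [norm_nonneg y]) (by linarith [norm_nonneg y]) (by linarith [norm_nonneg y])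
  have hl0 : 0 ≤ S.l y (ρ⁻¹ • w) := hb.2.2.1
  have hlle : S.l y (ρ⁻¹ • w) ≤ S.MR (‖y‖ + 1) * (1 + ‖ρ⁻¹ • w‖ ^ S.q) := hb.2.2.2
  have hcoer := h1.2.2.1 y _ haA
  have hna : ‖ρ⁻¹ • w‖ = ρ⁻¹ * ‖w‖ := by
    rw [norm_smul, Real.norm_eq_abs, abs_of_nonneg (by positivity)]
  have hρq : (0:ℝ) < ρ ^ S.q := by positivity
  have e1 : ρ ^ S.q * ‖ρ⁻¹ • w‖ ^ S.q = ‖w‖ ^ S.q := by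
    rw [hna, mul_pow, ← mul_assoc, ← mul_pow, mul_inv_cancel₀ hρ0.ne', one_pow, one_mul]
  refine ⟨by positivity, ?_, ?_⟩
  · calc ρ ^ S.q * S.l y (ρ⁻¹ • w)
        ≤ ρ ^ S.q * (S.MR (‖y‖ + 1) * (1 + ‖ρ⁻¹ • w‖ ^ S.q)) :=
          mul_le_mul_of_nonneg_left hlle hρq.le
      _ = S.MR (‖y‖ + 1) * (ρ ^ S.q + ρ ^ S.q * ‖ρ⁻¹ • w‖ ^ S.q) := by ring
      _ = S.MR (‖y‖ + 1) * (ρ ^ S.q + ‖w‖ ^ S.q) := by rw [e1]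
  · have h2 := mul_le_mul_of_nonneg_left hcoer hρq.le
    have e2 : ρ ^ S.q * (S.C₂ * ‖ρ⁻¹ • w‖ ^ S.q - S.C₁)
        = S.C₂ * (ρ ^ S.q * ‖ρ⁻¹ • w‖ ^ S.q) - S.C₁ * ρ ^ S.q := by ring
    rw [e2, e1] at h2
    exact h2

lemma aux_fInf_norm_le (hS : S.Setup) (y : XX n) {w : UU m} (hwA : w ∈ S.A)
    (hw : ‖w‖ ≤ 1) : ‖S.fInf y w‖ ≤ 2 * S.M * (1 + ‖y‖) := by
  have hconv := hS.2.2.1.2.2.2.2.2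
  have hsub : ({(y, w)} : Set (XX n × UU m)) ⊆ univ ×ˢ S.A := by
    intro z hz; rw [mem_singleton_iff] at hz; subst hz; exact ⟨mem_univ _, hwA⟩
  have htend := ((hconv _ isCompact_singleton hsub).1.tendsto_at (mem_singleton _)).norm
  refine le_of_tendsto htend ?_
  filter_upwards [Ioc_mem_nhdsGT_of_mem (left_mem_Ico.2 one_pos)] with ρ hρ
  exact S.aux_scaled_f_bound hS y hwA hw hρ.1 hρ.2

lemma aux_lInf_bounds (hS : S.Setup) (hq : S.q ≠ 0) (y : XX n) {w : UU m} (hwA : w ∈ S.A)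
    (hw : ‖w‖ ≤ 1) :
    S.C₂ * ‖w‖ ^ S.q ≤ S.lInf y w ∧ S.lInf y w ≤ S.MR (‖y‖ + 1) * (0 + ‖w‖ ^ S.q) := by
  have hconv := hS.2.2.1.2.2.2.2.2
  have hsub : ({(y, w)} : Set (XX n × UU m)) ⊆ univ ×ˢ S.A := by
    intro z hz; rw [mem_singleton_iff] at hz; subst hz; exact ⟨mem_univ _, hwA⟩
  have htend := (hconv _ isCompact_singleton hsub).2.tendsto_at (mem_singleton _)
  have hρq : Tendsto (fun ρ : ℝ => ρ ^ S.q) (𝓝[>] 0) (𝓝 0) :=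
    ((continuous_pow S.q).tendsto' 0 0 (zero_pow hq)).mono_left nhdsWithin_le_nhds
  constructor
  · have hlow : Tendsto (fun ρ : ℝ => S.C₂ * ‖w‖ ^ S.q - S.C₁ * ρ ^ S.q) (𝓝[>] 0)
        (𝓝 (S.C₂ * ‖w‖ ^ S.q)) := by
      simpa using tendsto_const_nhds.sub (hρq.const_mul S.C₁)
    refine le_of_tendsto_of_tendsto hlow htend ?_
    filter_upwards [self_mem_nhdsWithin] with ρ hρ
    exact (S.aux_scaled_l_bounds hS y hwA hρ).2.2
  · have hup : Tendsto (fun ρ : ℝ => S.MR (‖y‖ + 1) * (ρ ^ S.q + ‖w‖ ^ S.q)) (𝓝[>] 0)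
        (𝓝 (S.MR (‖y‖ + 1) * (0 + ‖w‖ ^ S.q))) :=
      (hρq.add tendsto_const_nhds).const_mul _
    refine le_of_tendsto_of_tendsto htend hup ?_
    filter_upwards [self_mem_nhdsWithin] with ρ hρ
    exact (S.aux_scaled_l_bounds hS y hwA hρ).2.1

lemma aux_fbar_norm_le (hS : S.Setup) (hq : S.q ≠ 0) (y : XX n) {w : UU m}
    (hw : w ∈ S.KA) : ‖S.fbar y (S.w0of w) w‖ ≤ 2 * S.M * (1 + ‖y‖) := by
  obtain ⟨hwA, hw1⟩ := hw
  by_cases h0 : S.w0of w = 0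
  · rw [fbar, if_pos h0]
    exact S.aux_fInf_norm_le hS y hwA hw1
  · have hpos : 0 < S.w0of w := lt_of_le_of_ne (S.aux_w0of_nonneg hw1) (Ne.symm h0)
    rw [fbar, if_neg h0]
    exact S.aux_scaled_f_bound hS y hwA hw1 hpos (S.aux_w0of_le_one hw1)

lemma aux_lbar_nonneg_le (hS : S.Setup) (hq : S.q ≠ 0) (y : XX n) {w : UU m}
    (hw : w ∈ S.KA) :
    0 ≤ S.lbar y (S.w0of w) w ∧ S.lbar y (S.w0of w) w ≤ S.MR (‖y‖ + 1) := by
  obtain ⟨hwA, hw1⟩ := hw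
  have hC₂ : 0 < S.C₂ := hS.2.2.1.2.1
  have hMRpos : 0 < S.MR (‖y‖ + 1) := (hS.2.1.2.2.2.2.2.2.1 _ (by positivity)).2
  have hwq : ‖w‖ ^ S.q ≤ 1 := pow_le_one₀ (norm_nonneg w) hw1
  by_cases h0 : S.w0of w = 0
  · rw [lbar, if_pos h0]
    obtain ⟨hlo, hhi⟩ := S.aux_lInf_bounds hS hq y hwA hw1
    refine ⟨le_trans (by positivity) hlo, le_trans hhi ?_⟩
    rw [zero_add]
    nlinarith [pow_nonneg (norm_nonneg w) S.q]
  · have hpos : 0 < S.w0of w := lt_of_le_of_ne (S.aux_w0of_nonneg hw1) (Ne.symm h0)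
    rw [lbar, if_neg h0]
    obtain ⟨h1, h2, -⟩ := S.aux_scaled_l_bounds hS y hwA hpos
    refine ⟨h1, le_trans h2 ?_⟩
    rw [S.aux_w0of_pow hq hw1]
    have : 1 - ‖w‖ ^ S.q + ‖w‖ ^ S.q = 1 := by ring
    rw [this, mul_one]

lemma aux_lbar_lower (hS : S.Setup) (hq : S.q ≠ 0) {c R : ℝ} (hc : 0 < c)
    (hlc : ∀ x : XX n, R ≤ ‖x‖ → ∀ a ∈ S.A, c ≤ S.l x a)
    (y : XX n) (hy : R ≤ ‖y‖) {w : UU m} (hw : w ∈ S.KA) :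
    c * S.C₂ / (c + S.C₁ + S.C₂) ≤ S.lbar y (S.w0of w) w := by
  obtain ⟨hwA, hw1⟩ := hw
  have hC₁ : 0 ≤ S.C₁ := hS.2.2.1.1
  have hC₂ : 0 < S.C₂ := hS.2.2.1.2.1
  have hden : 0 < c + S.C₁ + S.C₂ := by linarith
  by_cases h0 : S.w0of w = 0
  · -- boundary case : ‖w‖ ^ q = 1
    have hwq : ‖w‖ ^ S.q = 1 := by
      have := S.aux_w0of_pow hq hw1
      rw [h0, zero_pow hq] at this
      linarith
    rw [lbar, if_pos h0]
    have hlo := (S.aux_lInf_bounds hS hq y hwA hw1).1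
    rw [hwq, mul_one] at hlo
    refine le_trans ?_ hlo
    rw [div_le_iff₀ hden]
    nlinarith
  · have hpos : 0 < S.w0of w := lt_of_le_of_ne (S.aux_w0of_nonneg hw1) (Ne.symm h0)
    rw [lbar, if_neg h0]
    set θ := (S.w0of w) ^ S.q with hθ
    have hθpos : 0 < θ := by positivity
    have hwq : ‖w‖ ^ S.q = 1 - θ := by
      have := S.aux_w0of_pow hq hw1; rw [← hθ] at this; linarith
    obtain ⟨-, -, hlow⟩ := S.aux_scaled_l_bounds hS y hwA hpos
    rw [hwq] at hlow
    have hlc' : c ≤ S.l y ((S.w0of w)⁻¹ • w) := by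
      refine hlc y hy _ ?_
      exact hS.1.2.2.1 (S.w0of w)⁻¹ (by positivity) w hwA
    have h1 : c * θ ≤ θ * S.l y ((S.w0of w)⁻¹ • w) := by
      rw [mul_comm c θ]
      exact mul_le_mul_of_nonneg_left hlc' hθpos.le
    rcases le_total (S.C₂ / (c + S.C₁ + S.C₂)) θ with hcase | hcase
    · refine le_trans ?_ h1
      rw [mul_div_assoc]
      exact mul_le_mul_of_nonneg_left hcase hc.le
    · refine le_trans ?_ hlow
      rw [le_div_iff₀ hden] at hcase
      rw [div_le_iff₀ hden]
      nlinarith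
  
lemma aux_KA_closed (hS : S.Setup) : IsClosed S.KA := by
  have : S.KA = S.A ∩ {w : UU m | ‖w‖ ≤ 1} := rfl
  rw [this]
  exact hS.1.1.inter (isClosed_le continuous_norm continuous_const)

lemma aux_fbarr_norm_le (hS : S.Setup) (hq : S.q ≠ 0) (y : XX n)
    (ν : Measure (UU m)) [IsProbabilityMeasure ν] (hν : ν S.KAᶜ = 0) :
    ‖S.fbarr y ν‖ ≤ 2 * S.M * (1 + ‖y‖) := by
  have hae : ∀ᵐ w ∂ν, w ∈ S.KA := by
    rw [ae_iff]
    simpa [Set.compl_def] using hν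
  have h := norm_integral_le_of_norm_le_const (μ := ν)
    (f := fun w => S.fbar y (S.w0of w) w) (C := 2 * S.M * (1 + ‖y‖))
    (by filter_upwards [hae] with w hw; exact S.aux_fbar_norm_le hS hq y hw)
  simpa [measure_univ, fbarr] using h

lemma aux_lbarr_lower (hS : S.Setup) (hq : S.q ≠ 0) {c R : ℝ} (hc : 0 < c)
    (hlc : ∀ x : XX n, R ≤ ‖x‖ → ∀ a ∈ S.A, c ≤ S.l x a)
    (y : XX n) (hy : R ≤ ‖y‖)
    (ν : Measure (UU m)) [IsProbabilityMeasure ν] (hν : ν S.KAᶜ = 0) :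
    c * S.C₂ / (c + S.C₁ + S.C₂) ≤ S.lbarr y ν := by
  set F : UU m → ℝ := fun w => S.lbar y (S.w0of w) w with hF
  have hae : ∀ᵐ w ∂ν, w ∈ S.KA := by
    rw [ae_iff]
    simpa [Set.compl_def] using hν
  have hw0c : Continuous S.w0of := S.aux_w0of_continuous hq
  -- measurability
  have hKAm : MeasurableSet S.KA := (S.aux_KA_closed hS).measurableSet
  have hS₂m : MeasurableSet {w : UU m | S.w0of w = 0} :=
    hw0c.measurable (measurableSet_singleton 0)
  have hlIcont : ContinuousOn (fun w : UU m => S.lInf y w) S.A := by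
    have h := hS.2.2.1.2.2.2.2.1
    exact h.comp ((continuous_const.prodMk continuous_id).continuousOn)
      (fun w hw => ⟨mem_univ _, hw⟩)
  have hF₂ : ContinuousOn F (S.KA ∩ {w | S.w0of w = 0}) := by
    refine ContinuousOn.congr (hlIcont.mono (fun w hw => hw.1.1)) ?_
    intro w hw
    exact if_pos hw.2
  have hF₁ : ContinuousOn F (S.KA ∩ {w | S.w0of w = 0}ᶜ) := by
    have hw0ne : ∀ w ∈ S.KA ∩ {w | S.w0of w = 0}ᶜ, S.w0of w ≠ 0 := fun w hw => hw.2
    have hinner : ContinuousOn (fun w : UU m => (S.w0of w)⁻¹ • w)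
        (S.KA ∩ {w | S.w0of w = 0}ᶜ) :=
      ((hw0c.continuousOn.inv₀ hw0ne).smul continuous_id.continuousOn)
    have hmap : MapsTo (fun w : UU m => ((y : XX n), (S.w0of w)⁻¹ • w))
        (S.KA ∩ {w | S.w0of w = 0}ᶜ) (univ ×ˢ S.A) := by
      intro w hw
      refine ⟨mem_univ _, ?_⟩
      exact hS.1.2.2.1 _ (inv_nonneg.2 (S.aux_w0of_nonneg hw.1.2)) w hw.1.1
    have hlcont : ContinuousOn (fun w : UU m => S.l y ((S.w0of w)⁻¹ • w))
        (S.KA ∩ {w | S.w0of w = 0}ᶜ) := by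
      have h := hS.2.1.2.2.2.1
      exact h.comp ((continuous_const.continuousOn.prodMk hinner)) hmap
    refine ContinuousOn.congr (((hw0c.pow S.q).continuousOn).mul hlcont) ?_
    intro w hw
    exact if_neg hw.2
  have hFm : AEStronglyMeasurable F ν := by
    have h₁ : AEStronglyMeasurable F (ν.restrict (S.KA ∩ {w | S.w0of w = 0}ᶜ)) :=
      (hF₁.aemeasurable (hKAm.inter hS₂m.compl)).aestronglyMeasurable
    have h₂ : AEStronglyMeasurable F (ν.restrict (S.KA ∩ {w | S.w0of w = 0})) :=
      (hF₂.aemeasurable (hKAm.inter hS₂m)).aestronglyMeasurable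
    have hunion : S.KA = (S.KA ∩ {w | S.w0of w = 0}ᶜ) ∪ (S.KA ∩ {w | S.w0of w = 0}) := by
      rw [← inter_union_distrib_left, compl_union_self, inter_univ]
    have hKA : AEStronglyMeasurable F (ν.restrict S.KA) := by
      rw [hunion]
      exact (h₁.add_measure h₂).mono_measure (Measure.restrict_union_le _ _)
    have hν' : ν.restrict S.KA = ν := by
      conv_rhs => rw [← Measure.restrict_add_restrict_compl (μ := ν) hKAm]
      rw [Measure.restrict_eq_zero.2 hν, add_zero]
    rwa [hν'] at hKA
  have hint : Integrable F ν := by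
    refine Integrable.mono' (integrable_const (S.MR (‖y‖ + 1))) hFm ?_
    filter_upwards [hae] with w hw
    obtain ⟨h1, h2⟩ := S.aux_lbar_nonneg_le hS hq y hw
    rw [Real.norm_eq_abs, abs_of_nonneg h1]
    exact h2
  have hconst : (∫ _ : UU m, c * S.C₂ / (c + S.C₁ + S.C₂) ∂ν)
      = c * S.C₂ / (c + S.C₁ + S.C₂) := by
    simp [measure_univ]
  rw [← hconst]
  refine integral_mono_ae (integrable_const _) hint ?_
  filter_upwards [hae] with w hw
  exact S.aux_lbar_lower hS hq hc hlc y hy hw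

end Sys

end AuxLemmas


set_option maxHeartbeats 1000000 in
/-- if `liminf_{|x|→∞} inf_{a∈A} l(x,a) > 0` then every optimal relaxed
trajectory (for a point of finite relaxed value) is bounded. -/
theorem stmt_14 {n m : ℕ} (hn : 1 ≤ n) (hm : 1 ≤ m) (S : Sys n m) (hS : S.Setup)
    (hl : ∃ c > (0:ℝ), ∃ R : ℝ, ∀ x : XX n, R ≤ ‖x‖ → ∀ a ∈ S.A, c ≤ S.l x a) :
    ∀ x : XX n, S.rInfVal x < ⊤ →
      ∀ μ, S.RAdmissible μ → S.rInfCost x μ = S.rInfVal x →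
        ∃ B : ℝ, ∀ s ≥ (0:ℝ), ‖S.rtraj x μ s‖ ≤ B := by
  obtain ⟨c, hc, R, hlc⟩ := hl
  intro x hV μ hμ hopt
  have hM : 0 < S.M := hS.2.1.2.2.2.2.1
  have hq : S.q ≠ 0 := by
    have h1p := hS.2.1.1
    have hpq := hS.2.1.2.1
    omega
  have hC₁ : 0 ≤ S.C₁ := hS.2.2.1.1
  have hC₂ : 0 < S.C₂ := hS.2.2.1.2.1
  obtain ⟨hgc, hg0, hgint⟩ := (hS.2.2.2.2.2 x μ hμ).1
  set g := S.rtraj x μ with hg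
  set c' := c * S.C₂ / (c + S.C₁ + S.C₂) with hc'def
  have hc' : 0 < c' := div_pos (mul_pos hc hC₂) (by linarith)
  set R' := max R ‖x‖ with hR'
  have hxR' : ‖x‖ ≤ R' := le_max_right _ _
  have hRR' : R ≤ R' := le_max_left _ _
  have hR'0 : 0 ≤ R' := le_trans (norm_nonneg x) hxR'
  have hgnorm : ContinuousOn (fun s => ‖g s‖) (Ici 0) := continuous_norm.comp_continuousOn hgc
  set Bad := Ioi (0:ℝ) ∩ (Ici (0:ℝ) ∩ (fun s => ‖g s‖) ⁻¹' Ici R') with hBadDef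
  have hBadm : MeasurableSet Bad :=
    measurableSet_Ioi.inter
      (hgnorm.preimage_isClosed_of_isClosed isClosed_Ici isClosed_Ici).measurableSet
  have hcost : S.rInfCost x μ < ⊤ := by rw [hopt]; exact hV
  have hlow : ENNReal.ofReal c' * volume Bad ≤ S.rInfCost x μ := by
    rw [← setLIntegral_const Bad (ENNReal.ofReal c')]
    calc ∫⁻ _ in Bad, ENNReal.ofReal c'
        ≤ ∫⁻ s in Bad, ENNReal.ofReal (S.lbarr (g s) (μ s)) := by
          refine lintegral_mono_ae ?_
          rw [ae_restrict_iff' hBadm]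
          refine ae_of_all _ (fun s hs => ?_)
          haveI := hμ.1 s
          exact ENNReal.ofReal_le_ofReal
            (S.aux_lbarr_lower hS hq hc hlc (g s) (le_trans hRR' hs.2.2) (μ s) (hμ.2.1 s))
      _ ≤ ∫⁻ s in Ioi 0, ENNReal.ofReal (S.lbarr (g s) (μ s)) :=
          lintegral_mono_set (fun s hs => hs.1)
      _ = S.rInfCost x μ := rfl
  have hBadfin : volume Bad ≠ ⊤ := by
    intro h
    rw [h, ENNReal.mul_top ((ENNReal.ofReal_pos.2 hc').ne')] at hlow
    exact lt_irrefl ⊤ (lt_of_le_of_lt hlow hcost)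
  set T₀ := (volume Bad).toReal with hT₀
  have hT₀0 : 0 ≤ T₀ := ENNReal.toReal_nonneg
  set B := (1 + R') * Real.exp (2 * S.M * T₀) with hB
  have hexp1 : 1 ≤ Real.exp (2 * S.M * T₀) := Real.one_le_exp (by positivity)
  have hR'B : R' ≤ B := by nlinarith
  refine ⟨B, ?_⟩
  intro t ht0
  by_cases hInt : IntervalIntegrable (fun s => S.fbarr (g s) (μ s)) volume 0 t
  swap
  · have hgt : g t = x := by
      rw [hgint t ht0, intervalIntegral.integral_undef hInt, add_zero]
    rw [hgt]
    exact le_trans hxR' hR'B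
  by_cases hgt : ‖g t‖ ≤ R'
  · exact le_trans hgt hR'B
  push_neg at hgt
  have hnormIcc : ContinuousOn (fun τ => ‖g τ‖) (Icc 0 t) := hgnorm.mono Icc_subset_Ici_self
  set K₀ := Icc 0 t ∩ (fun τ => ‖g τ‖) ⁻¹' Iic R' with hK₀
  have hK₀closed : IsClosed K₀ :=
    hnormIcc.preimage_isClosed_of_isClosed isClosed_Icc isClosed_Iic
  have hK₀cpt : IsCompact K₀ := isCompact_Icc.of_isClosed_subset hK₀closed inter_subset_left
  have hK₀ne : K₀.Nonempty :=
    ⟨0, ⟨le_refl 0, ht0⟩, by simp only [mem_preimage, mem_Iic, hg0]; exact hxR'⟩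
  set σ := sSup K₀ with hσdef
  have hσK := hK₀cpt.sSup_mem hK₀ne
  have hσ0 : 0 ≤ σ := hσK.1.1
  have hσt : σ ≤ t := hσK.1.2
  have hgσ : ‖g σ‖ ≤ R' := hσK.2
  have hafter : ∀ τ, σ < τ → τ ≤ t → R' < ‖g τ‖ := by
    intro τ h1 h2
    by_contra hle
    push_neg at hle
    have hmem : τ ∈ K₀ := ⟨⟨le_trans hσ0 h1.le, h2⟩, hle⟩
    exact absurd (le_csSup hK₀cpt.bddAbove hmem) (not_le.2 h1)
  have hsub : Ioc σ t ⊆ Bad := fun τ hτ =>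
    ⟨lt_of_le_of_lt hσ0 hτ.1, le_trans hσ0 hτ.1.le, (hafter τ hτ.1 hτ.2).le⟩
  have hlen : t - σ ≤ T₀ := by
    have h1 : volume (Ioc σ t) ≤ volume Bad := measure_mono hsub
    rw [Real.volume_Ioc] at h1
    have h2 := ENNReal.toReal_mono hBadfin h1
    rwa [ENNReal.toReal_ofReal (by linarith)] at h2
  -- Gronwall argument on [σ, t]
  have hφ : Continuous fun τ : ℝ => ‖g (max τ 0)‖ :=
    (hgc.comp_continuous (continuous_id.max continuous_const)
      (fun τ => mem_Ici.2 (le_max_right _ _))).norm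
  have hh : Continuous fun τ : ℝ => 2 * S.M * (1 + ‖g (max τ 0)‖) :=
    continuous_const.mul (continuous_const.add hφ)
  set G : ℝ → ℝ := fun τ => ∫ u in σ..τ, 2 * S.M * (1 + ‖g (max u 0)‖) with hGdef
  have hG' : ∀ τ, HasDerivAt G (2 * S.M * (1 + ‖g (max τ 0)‖)) τ := fun τ =>
    (hh.integral_hasStrictDerivAt σ τ).hasDerivAt
  have hGc : Continuous G := continuous_iff_continuousAt.2 fun τ => (hG' τ).continuousAt
  have hkey : ∀ τ, σ ≤ τ → τ ≤ t → ‖g τ‖ ≤ ‖g σ‖ + G τ := by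
    intro τ h1 h2
    have hτ0 : 0 ≤ τ := le_trans hσ0 h1
    have i0τ : IntervalIntegrable (fun s => S.fbarr (g s) (μ s)) volume 0 τ :=
      hInt.mono_set (by rw [uIcc_of_le hτ0, uIcc_of_le ht0]; exact Icc_subset_Icc le_rfl h2)
    have i0σ : IntervalIntegrable (fun s => S.fbarr (g s) (μ s)) volume 0 σ :=
      hInt.mono_set (by rw [uIcc_of_le hσ0, uIcc_of_le ht0]; exact Icc_subset_Icc le_rfl hσt)
    have iστ : IntervalIntegrable (fun s => S.fbarr (g s) (μ s)) volume σ τ :=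
      hInt.mono_set (by rw [uIcc_of_le h1, uIcc_of_le ht0]; exact Icc_subset_Icc hσ0 h2)
    have e1 : g τ - g σ = ∫ u in σ..τ, S.fbarr (g u) (μ u) := by
      rw [hgint τ hτ0, hgint σ hσ0, add_sub_add_left_eq_sub,
        intervalIntegral.integral_interval_sub_left i0τ i0σ]
    have e2 : ‖g τ - g σ‖ ≤ G τ := by
      rw [e1]
      refine le_trans (intervalIntegral.norm_integral_le_integral_norm h1) ?_
      refine intervalIntegral.integral_mono_on h1 iστ.norm (hh.intervalIntegrable σ τ) ?_
      intro u hu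
      have hu0 : 0 ≤ u := le_trans hσ0 hu.1
      haveI := hμ.1 u
      have hb := S.aux_fbarr_norm_le hS hq (g u) (μ u) (hμ.2.1 u)
      rw [max_eq_left hu0]
      exact hb
    calc ‖g τ‖ = ‖g σ + (g τ - g σ)‖ := by rw [add_sub_cancel]
      _ ≤ ‖g σ‖ + ‖g τ - g σ‖ := norm_add_le _ _
      _ ≤ ‖g σ‖ + G τ := by linarith
  have hgr := norm_le_gronwallBound_of_norm_deriv_right_le (f := G)
    (f' := fun τ => 2 * S.M * (1 + ‖g (max τ 0)‖)) (δ := 0) (K := 2 * S.M)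
    (ε := 2 * S.M * (1 + ‖g σ‖)) (a := σ) (b := t)
    hGc.continuousOn (fun τ _ => (hG' τ).hasDerivWithinAt)
    (by simp [hGdef]) ?_
  swap
  · intro τ hτ
    have hτ0 : 0 ≤ τ := le_trans hσ0 hτ.1
    have hGτ : 0 ≤ G τ := intervalIntegral.integral_nonneg hτ.1 (fun u _ => by positivity)
    have hk := hkey τ hτ.1 hτ.2.le
    have hmax : max τ 0 = τ := max_eq_left hτ0
    simp only [hmax]
    rw [Real.norm_eq_abs, abs_of_nonneg (by positivity : (0:ℝ) ≤ 2 * S.M * (1 + ‖g τ‖)),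
      Real.norm_eq_abs, abs_of_nonneg hGτ]
    nlinarith
  have hGt := hgr t (right_mem_Icc.2 hσt)
  rw [Real.norm_eq_abs,
    abs_of_nonneg (intervalIntegral.integral_nonneg hσt (fun u _ => by positivity) :
      (0:ℝ) ≤ G t)] at hGt
  rw [gronwallBound_of_K_ne_0 (by positivity : (2 * S.M) ≠ 0)] at hGt
  have hediv : 2 * S.M * (1 + ‖g σ‖) / (2 * S.M) = 1 + ‖g σ‖ := by field_simp
  rw [hediv] at hGt
  have hGt' : G t ≤ 0 * Real.exp (2 * S.M * (t - σ))
      + (1 + ‖g σ‖) * (Real.exp (2 * S.M * (t - σ)) - 1) := hGt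
  rw [zero_mul, zero_add] at hGt' 
  have hk := hkey t hσt le_rfl
  have hE : Real.exp (2 * S.M * (t - σ)) ≤ Real.exp (2 * S.M * T₀) :=
    Real.exp_le_exp.2 (by nlinarith)
  have hE1 : 1 ≤ Real.exp (2 * S.M * (t - σ)) := Real.one_le_exp (by nlinarith)
  rw [hB]
  nlinarith [norm_nonneg (g σ), hGt', hk,
    mul_le_mul_of_nonneg_right (add_le_add_left hgσ 1)
      (by linarith : (0:ℝ) ≤ Real.exp (2 * S.M * (t - σ))),
    mul_le_mul_of_nonneg_left hE (by linarith : (0:ℝ) ≤ 1 + R')]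
end
end
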